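/- Let α, β, γ ∈ ℝ and consider the reduced Somos-6 map φ̂: (x0,x1,x2,x3) ↦ (x1,x2,x3,x4), where x4 := (α·x3·x2²·x1 + β·x2 + γ)/(x0·x1²·x2³·x3²), defined on the open set where x0x1x2x3 ≠ 0. Then the determinant of the 4×4 Jacobian matrix of partial derivatives of φ̂ equals (α·x3·x2²·x1 + β·x2 + γ)/(x0²·x1²·x2³·x3²) = (x1x2x3x4)/(x0x1x2x3); consequently φ̂ preserves the meromorphic volume form V̂ = (x0x1x2x3)⁻¹ dx0 ∧ dx1 ∧ dx2 ∧ dx3 for arbitrary values of α, β, γ. -/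

import Mathlib

noncomputable section

private lemma somos_det_aux (A B C D : ℝ) :
    Matrix.det !![(0:ℝ),1,0,0; 0,0,1,0; 0,0,0,1; A,B,C,D] = -A := by
  simp [Matrix.det_succ_row_zero, Fin.sum_univ_succ, Fin.succAbove]

/-- The reduced Somos-6 map `φ̂ : (x0,x1,x2,x3) ↦ (x1,x2,x3,x4)` with
`x4 = (αx3x2²x1 + βx2 + γ)/(x0x1²x2³x3²)` has Jacobian determinant
`(αx3x2²x1 + βx2 + γ)/(x0²x1²x2³x3²) = (x1x2x3x4)/(x0x1x2x3)` at every point of the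
open set `{x0x1x2x3 ≠ 0}`; consequently it preserves the meromorphic volume form
`V̂ = (x0x1x2x3)⁻¹ dx0∧dx1∧dx2∧dx3` for arbitrary `α, β, γ`. -/
theorem reduced_somos6_jacobian (α β γ : ℝ) (p : Fin 4 → ℝ)
    (hp : p 0 * p 1 * p 2 * p 3 ≠ 0) :
    let φ : (Fin 4 → ℝ) → (Fin 4 → ℝ) := fun q =>
      ![q 1, q 2, q 3,
        (α * q 3 * (q 2)^2 * q 1 + β * q 2 + γ) / (q 0 * (q 1)^2 * (q 2)^3 * (q 3)^2)]
    let x4 : ℝ :=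
      (α * p 3 * (p 2)^2 * p 1 + β * p 2 + γ) / (p 0 * (p 1)^2 * (p 2)^3 * (p 3)^2)
    Matrix.det (Matrix.of fun i j : Fin 4 => fderiv ℝ (fun q => φ q i) p (Pi.single j 1))
        = (α * p 3 * (p 2)^2 * p 1 + β * p 2 + γ) / ((p 0)^2 * (p 1)^2 * (p 2)^3 * (p 3)^2)
    ∧ (α * p 3 * (p 2)^2 * p 1 + β * p 2 + γ) / ((p 0)^2 * (p 1)^2 * (p 2)^3 * (p 3)^2)
        = (p 1 * p 2 * p 3 * x4) / (p 0 * p 1 * p 2 * p 3) := by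
  intro φ x4
  have h0 : p 0 ≠ 0 := fun h => hp (by rw [h]; ring)
  have h1 : p 1 ≠ 0 := fun h => hp (by rw [h]; ring)
  have h2 : p 2 ≠ 0 := fun h => hp (by rw [h]; ring)
  have h3 : p 3 ≠ 0 := fun h => hp (by rw [h]; ring)
  have hproj : ∀ k : Fin 4, HasFDerivAt (fun q : Fin 4 → ℝ => q k)
      (ContinuousLinearMap.proj k : (Fin 4 → ℝ) →L[ℝ] ℝ) p :=
    fun k => by exact hasFDerivAt_apply k p
  have hN : HasFDerivAt (fun q : Fin 4 → ℝ => α * q 3 * (q 2 * q 2) * q 1 + β * q 2 + γ) _ p :=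
    (((((hproj 3).const_mul α).mul ((hproj 2).mul (hproj 2))).mul (hproj 1)).add
      ((hproj 2).const_mul β)).add_const γ
  have hD : HasFDerivAt
      (fun q : Fin 4 → ℝ => q 0 * (q 1 * q 1) * (q 2 * q 2 * q 2) * (q 3 * q 3)) _ p :=
    (((hproj 0).mul ((hproj 1).mul (hproj 1))).mul (((hproj 2).mul (hproj 2)).mul (hproj 2))).mul
      ((hproj 3).mul (hproj 3))
  have hDp : p 0 * (p 1 * p 1) * (p 2 * p 2 * p 2) * (p 3 * p 3) ≠ 0 := by
    simp [h0, h1, h2, h3]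
  have hinv := (hasFDerivAt_inv (𝕜 := ℝ) hDp).comp p hD
  have hf := (hN.mul hinv).congr_of_eventuallyEq (Filter.EventuallyEq.of_eq (by
    funext q
    show _ = _ * ((fun x : ℝ => x⁻¹) ∘ _) q
    simp only [Function.comp_apply]
    ring) :
    (fun q : Fin 4 → ℝ =>
      (α * q 3 * (q 2)^2 * q 1 + β * q 2 + γ) / (q 0 * (q 1)^2 * (q 2)^3 * (q 3)^2))
      =ᶠ[nhds p] _)
  have hfd := hf.fderiv
  have v0 := congrArg (fun L => L (Pi.single (0:Fin 4) (1:ℝ))) hfd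
  simp only [ContinuousLinearMap.smul_apply, ContinuousLinearMap.add_apply,
    ContinuousLinearMap.sub_apply, ContinuousLinearMap.proj_apply,
    ContinuousLinearMap.comp_apply, ContinuousLinearMap.smulRight_apply,
    ContinuousLinearMap.one_apply, Function.comp_apply, ContinuousLinearMap.toSpanSingleton_apply,
    Pi.mul_apply, Pi.pow_apply,
    smul_eq_mul, Pi.single_eq_same, ne_eq, Fin.isValue,
    Pi.single_eq_of_ne (by decide : (1:Fin 4) ≠ 0),
    Pi.single_eq_of_ne (by decide : (2:Fin 4) ≠ 0),
    Pi.single_eq_of_ne (by decide : (3:Fin 4) ≠ 0)] at v0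
  constructor
  · have hmat : (Matrix.of fun i j : Fin 4 => fderiv ℝ (fun q => φ q i) p (Pi.single j 1))
        = !![(0:ℝ),1,0,0; 0,0,1,0; 0,0,0,1;
            fderiv ℝ (fun q : Fin 4 → ℝ =>
              (α * q 3 * (q 2)^2 * q 1 + β * q 2 + γ) / (q 0 * (q 1)^2 * (q 2)^3 * (q 3)^2)) p
              (Pi.single 0 1),
            fderiv ℝ (fun q : Fin 4 → ℝ =>
              (α * q 3 * (q 2)^2 * q 1 + β * q 2 + γ) / (q 0 * (q 1)^2 * (q 2)^3 * (q 3)^2)) p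
              (Pi.single 1 1),
            fderiv ℝ (fun q : Fin 4 → ℝ =>
              (α * q 3 * (q 2)^2 * q 1 + β * q 2 + γ) / (q 0 * (q 1)^2 * (q 2)^3 * (q 3)^2)) p
              (Pi.single 2 1),
            fderiv ℝ (fun q : Fin 4 → ℝ =>
              (α * q 3 * (q 2)^2 * q 1 + β * q 2 + γ) / (q 0 * (q 1)^2 * (q 2)^3 * (q 3)^2)) p
              (Pi.single 3 1)] := by
      ext i j
      fin_cases i <;> fin_cases j <;>
        simp [φ, (hproj 1).fderiv, (hproj 2).fderiv, (hproj 3).fderiv, Pi.single_apply]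
    rw [hmat, somos_det_aux, v0]
    field_simp
    ring
  · show _ = p 1 * p 2 * p 3 *
      ((α * p 3 * (p 2)^2 * p 1 + β * p 2 + γ) / (p 0 * (p 1)^2 * (p 2)^3 * (p 3)^2)) /
      (p 0 * p 1 * p 2 * p 3)
    field_simp
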